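/- Let λ > 0, L = λ^δ with 0 < δ < 1, and ε > 0. Assume #{ξ ∈ ℤ² : |ξ|² = n} ≪ n^ε for all n ≥ 1. Then the tail sum Σ_{ξ ∈ ℤ², ||ξ|² − λ| > L} 1/(|ξ|² − λ)² ≪ λ^ε / L. -/
import Mathlib


open Real

lemma gtb_fiber_finite (n : ℤ) : ({ξ : ℤ × ℤ | ξ.1 ^ 2 + ξ.2 ^ 2 = n}).Finite := by
  apply Set.Finite.subset (Set.finite_Icc ((-n, -n) : ℤ × ℤ) (n, n))
  rintro ⟨x, y⟩ h
  simp only [Set.mem_setOf_eq] at h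
  have hx : |x| ≤ x^2 := by rw [← Int.natCast_natAbs]; exact Int.natAbs_le_self_sq x
  have hy : |y| ≤ y^2 := by rw [← Int.natCast_natAbs]; exact Int.natAbs_le_self_sq y
  have hx1 : x ≤ x^2 := (le_abs_self x).trans hx
  have hx2 : -x ≤ x^2 := (neg_le_abs x).trans hx
  have hy1 : y ≤ y^2 := (le_abs_self y).trans hy
  have hy2 : -y ≤ y^2 := (neg_le_abs y).trans hy
  simp only [Set.mem_Icc, Prod.le_def]
  refine ⟨⟨?_, ?_⟩, ?_, ?_⟩ <;> nlinarith [sq_nonneg x, sq_nonneg y]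

lemma gtb_telescope (L : ℝ) (hL : 1 ≤ L) (J : Finset ℕ) :
    ∑ j ∈ J, (2 / (L + j) - 2 / (L + j + 1)) ≤ 2 / L := by
  have hL0 : (0:ℝ) < L := by linarith
  set N := J.sup id + 1 with hN
  have hsub : J ⊆ Finset.range N :=
    fun j hj => Finset.mem_range.2 (Nat.lt_succ_of_le (Finset.le_sup (f := id) hj))
  have hnn : ∀ j : ℕ, (0:ℝ) ≤ 2 / (L + j) - 2 / (L + j + 1) := by
    intro j
    have h1 : (0:ℝ) < L + j := by positivity
    rw [sub_nonneg]
    apply div_le_div_of_nonneg_left (by norm_num) h1 (by linarith)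
  calc ∑ j ∈ J, (2 / (L + j) - 2 / (L + j + 1))
      ≤ ∑ j ∈ Finset.range N, (2 / (L + j) - 2 / (L + j + 1)) :=
        Finset.sum_le_sum_of_subset_of_nonneg hsub (fun j _ _ => hnn j)
    _ = 2 / L - 2 / (L + N) := by
        have h := Finset.sum_range_sub' (f := fun j : ℕ => 2 / (L + (j:ℝ))) N
        simp only [Nat.cast_zero, add_zero] at h
        rw [← h]
        apply Finset.sum_congr rfl
        intro j _
        push_cast
        ring_nf
    _ ≤ 2 / L := by
        have : (0:ℝ) ≤ 2 / (L + N) := by positivity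
        linarith

lemma gtb_side (lam L : ℝ) (hL : 1 ≤ L) (B : Finset ℤ) (e : ℤ → ℕ)
    (he : Set.InjOn e B)
    (hdist : ∀ n ∈ B, L + (e n : ℝ) ≤ |(n:ℝ) - lam|) :
    ∑ n ∈ B, 1 / ((n:ℝ) - lam) ^ 2 ≤ 2 / L := by
  have step : ∀ n ∈ B, 1/((n:ℝ)-lam)^2 ≤ 2/(L + e n) - 2/(L + e n + 1) := by
    intro n hn
    have h1 : (0:ℝ) < L + e n := by positivity
    have h2 := hdist n hn
    have h3 : (L + (e n:ℝ))^2 ≤ ((n:ℝ)-lam)^2 := by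
      calc (L + (e n:ℝ))^2 ≤ |(n:ℝ)-lam|^2 := by
            apply pow_le_pow_left₀ h1.le h2
        _ = ((n:ℝ)-lam)^2 := sq_abs _
    have h4 : 1/((n:ℝ)-lam)^2 ≤ 1/(L + (e n:ℝ))^2 :=
      one_div_le_one_div_of_le (by positivity) h3
    have h5 : 1/(L + (e n:ℝ))^2 ≤ 2/(L + e n) - 2/(L + e n + 1) := by
      have h6 : 2/((L + (e n:ℝ))*(L + e n + 1)) = 2/(L + (e n:ℝ)) - 2/(L + e n + 1) := by
        field_simp
        ring
      rw [← h6, div_le_div_iff₀ (by positivity) (by positivity)]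
      nlinarith [h1, sq_nonneg (L + (e n:ℝ))]
    linarith
  calc ∑ n ∈ B, 1/((n:ℝ)-lam)^2 ≤ ∑ n ∈ B, (2/(L + e n) - 2/(L + e n + 1)) :=
        Finset.sum_le_sum step
    _ = ∑ j ∈ B.image e, (2/(L + j) - 2/(L + j + 1)) :=
        (Finset.sum_image (f := fun j : ℕ => 2/(L + (j:ℝ)) - 2/(L + (j:ℝ) + 1))
          (fun x hx y hy h => he hx hy h)).symm
    _ ≤ 2 / L := gtb_telescope L hL _

lemma gtb_int_sum (lam L : ℝ) (hL : 1 ≤ L) (A : Finset ℤ)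
    (hA : ∀ n ∈ A, L < |(n : ℝ) - lam|) :
    ∑ n ∈ A, 1 / ((n : ℝ) - lam) ^ 2 ≤ 4 / L := by
  classical
  have hsplit := Finset.sum_filter_add_sum_filter_not A (fun n : ℤ => lam < (n:ℝ))
    (fun n : ℤ => 1 / ((n : ℝ) - lam) ^ 2)
  set Ap := A.filter (fun n : ℤ => lam < (n:ℝ)) with hAp
  set Am := A.filter (fun n : ℤ => ¬ lam < (n:ℝ)) with hAm
  have hplus : ∑ n ∈ Ap, 1 / ((n : ℝ) - lam) ^ 2 ≤ 2 / L := by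
    set m := ⌈lam + L⌉ with hm
    have hmem : ∀ n ∈ Ap, m ≤ n ∧ L + ((n - m : ℤ) : ℝ) ≤ |(n:ℝ) - lam| := by
      intro n hn
      rw [hAp, Finset.mem_filter] at hn
      have h1 := hA n hn.1
      have h2 : lam < (n:ℝ) := hn.2
      have h3 : L < (n:ℝ) - lam := by
        rw [abs_of_pos (by linarith)] at h1; exact h1
      have h4 : lam + L ≤ (n:ℝ) := by linarith
      have h5 : m ≤ n := Int.ceil_le.2 (by exact_mod_cast h4)
      refine ⟨h5, ?_⟩
      have h6 : lam + L ≤ (m:ℝ) := Int.le_ceil _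
      rw [abs_of_pos (by linarith)]
      push_cast
      linarith
    apply gtb_side lam L hL Ap (fun n => (n - m).toNat)
    · intro x hx y hy hxy
      have hx' := (hmem x hx).1
      have hy' := (hmem y hy).1
      simp only at hxy
      omega
    · intro n hn
      have h := (hmem n hn).2
      have h5 := (hmem n hn).1
      have hc : (((n - m).toNat : ℕ) : ℝ) = ((n - m : ℤ) : ℝ) := by
        have h7 : ((n - m).toNat : ℤ) = n - m := Int.toNat_of_nonneg (by omega)
        exact_mod_cast congrArg (fun z : ℤ => (z:ℝ)) h7
      rw [hc]
      exact h
  have hminus : ∑ n ∈ Am, 1 / ((n : ℝ) - lam) ^ 2 ≤ 2 / L := by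
    set m := ⌊lam - L⌋ with hm
    have hmem : ∀ n ∈ Am, n ≤ m ∧ L + ((m - n : ℤ) : ℝ) ≤ |(n:ℝ) - lam| := by
      intro n hn
      rw [hAm, Finset.mem_filter] at hn
      have h1 := hA n hn.1
      have h2 : (n:ℝ) ≤ lam := le_of_not_gt hn.2
      have h3 : L < lam - (n:ℝ) := by
        rw [abs_of_nonpos (by linarith)] at h1; linarith
      have h4 : (n:ℝ) ≤ lam - L := by linarith
      have h5 : n ≤ m := Int.le_floor.2 (by exact_mod_cast h4)
      refine ⟨h5, ?_⟩
      have h6 : (m:ℝ) ≤ lam - L := Int.floor_le _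
      rw [abs_of_nonpos (by linarith)]
      push_cast
      linarith
    apply gtb_side lam L hL Am (fun n => (m - n).toNat)
    · intro x hx y hy hxy
      have hx' := (hmem x hx).1
      have hy' := (hmem y hy).1
      simp only at hxy
      omega
    · intro n hn
      have h := (hmem n hn).2
      have h5 := (hmem n hn).1
      have hc : (((m - n).toNat : ℕ) : ℝ) = ((m - n : ℤ) : ℝ) := by
        have h7 : ((m - n).toNat : ℤ) = m - n := Int.toNat_of_nonneg (by omega)
        exact_mod_cast congrArg (fun z : ℤ => (z:ℝ)) h7
      rw [hc]
      exact h
  have h4 : (4:ℝ)/L = 2/L + 2/L := by ring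
  rw [← hsplit, h4]
  exact add_le_add hplus hminus

noncomputable def gtbH (t : ℝ) (k : ℤ) : ℝ := (1 + (k:ℝ)^2) ^ (-t/2)

lemma gtbH_pos (t : ℝ) (k : ℤ) : 0 < gtbH t k := by
  unfold gtbH
  positivity

lemma gtbH_summable {t : ℝ} (ht : 1 < t) : Summable (gtbH t) := by
  have ht0 : 0 < t := by linarith
  have key : ∀ k : ℤ, gtbH t k ≤ (2:ℝ)^(t/2) * (|(k:ℝ)| + 1) ^ (-t) := by
    intro k
    unfold gtbH
    have hb : (0:ℝ) < |(k:ℝ)| + 1 := by positivity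
    have ha : (0:ℝ) < 1 + (k:ℝ)^2 := by positivity
    have h1 : (|(k:ℝ)| + 1)^2 / 2 ≤ 1 + (k:ℝ)^2 := by
      nlinarith [sq_nonneg (|(k:ℝ)| - 1), sq_abs (k:ℝ)]
    have h2 : ((|(k:ℝ)| + 1)^2 / 2) ^ (t/2) ≤ (1 + (k:ℝ)^2) ^ (t/2) :=
      rpow_le_rpow (by positivity) h1 (by positivity)
    have h3 : ((|(k:ℝ)| + 1)^2 / 2) ^ (t/2) = (|(k:ℝ)| + 1)^t / 2^(t/2) := by
      rw [div_rpow (by positivity) (by norm_num), ← rpow_natCast (|(k:ℝ)| + 1) 2,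
        ← rpow_mul hb.le]
      norm_num
      rw [show (2:ℝ) * (t/2) = t by ring]
    have h4 : (|(k:ℝ)| + 1)^t / 2^(t/2) ≤ (1 + (k:ℝ)^2) ^ (t/2) := h3 ▸ h2
    have hbp : (0:ℝ) < (|(k:ℝ)| + 1)^t := rpow_pos_of_pos hb t
    have hap : (0:ℝ) < (1 + (k:ℝ)^2)^(t/2) := rpow_pos_of_pos ha _
    rw [neg_div, rpow_neg ha.le, rpow_neg hb.le, ← one_div, ← div_eq_mul_inv,
      div_le_div_iff₀ hap hbp]
    rw [div_le_iff₀ (by positivity : (0:ℝ) < 2^(t/2))] at h4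
    nlinarith [hap, hbp]
  have hnat : Summable (fun n : ℕ => ((n:ℝ) + 1) ^ (-t)) := by
    have h0 : Summable (fun n : ℕ => (n:ℝ) ^ (-t)) := summable_nat_rpow.2 (by linarith)
    have h1 := (summable_nat_add_iff (f := fun n : ℕ => (n:ℝ) ^ (-t)) 1).2 h0
    apply h1.congr
    intro n
    push_cast
    rfl
  have hsum : Summable (fun k : ℤ => (2:ℝ)^(t/2) * (|(k:ℝ)| + 1) ^ (-t)) := by
    apply Summable.mul_left
    apply Summable.of_nat_of_neg
    · apply hnat.congr
      intro n
      norm_num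
    · apply hnat.congr
      intro n
      push_cast
      rw [abs_neg, abs_of_nonneg (by positivity : (0:ℝ) ≤ (n:ℝ))]
  exact Summable.of_nonneg_of_le (fun k => (gtbH_pos t k).le) key hsum

lemma gtb_far (δ lam : ℝ) (hδ0 : 0 < δ) (hδ : δ < 1) (hlam : 1 ≤ lam) (x y : ℤ)
    (hq : 2 * lam < ((x ^ 2 + y ^ 2 : ℤ) : ℝ)) :
    1 / (((x ^ 2 + y ^ 2 : ℤ) : ℝ) - lam) ^ 2 ≤
      4 * lam ^ (-(1 + δ) / 2) * (gtbH ((3 - δ) / 2) x * gtbH ((3 - δ) / 2) y) := by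
  have hcast : ((x ^ 2 + y ^ 2 : ℤ) : ℝ) = (x:ℝ)^2 + (y:ℝ)^2 := by push_cast; ring
  rw [hcast] at hq ⊢
  set a : ℝ := (x:ℝ)^2 with ha
  set b : ℝ := (y:ℝ)^2 with hb
  set q : ℝ := a + b with hqdef
  have ha0 : 0 ≤ a := sq_nonneg _
  have hb0 : 0 ≤ b := sq_nonneg _
  have hq2 : 2 ≤ q := by nlinarith
  have hq0 : 0 < q := by linarith
  have hhalf : q / 2 ≤ q - lam := by linarith
  have hqlam : 0 < q - lam := by linarith
  have s1 : 1 / (q - lam)^2 ≤ 4 / q^2 := by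
    rw [div_le_div_iff₀ (by positivity) (by positivity)]
    nlinarith [hhalf, hqlam]
  have s2 : (1 + a) * (1 + b) ≤ q^2 := by nlinarith [sq_nonneg (a - b)]
  set t : ℝ := (3 - δ) / 2 with htdef
  have ht1 : 1 < t := by rw [htdef]; linarith
  have ht0 : 0 < t := by linarith
  have h2t : 0 < 2 - t := by rw [htdef]; linarith
  have e1 : q ^ (2:ℝ) = q ^ (2 - t) * q ^ t := by
    rw [← rpow_add hq0]; norm_num
  have e2 : lam ^ (2 - t) ≤ q ^ (2 - t) :=
    rpow_le_rpow (by linarith) (by nlinarith) h2t.le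
  have e3 : ((1 + a) * (1 + b)) ^ (t/2) ≤ q ^ t := by
    calc ((1 + a) * (1 + b)) ^ (t/2) ≤ (q^2) ^ (t/2) :=
          rpow_le_rpow (by positivity) s2 (by positivity)
      _ = q ^ t := by
          rw [← rpow_natCast q 2, ← rpow_mul hq0.le]
          norm_num
          rw [show (2:ℝ) * (t/2) = t by ring]
  have hht : gtbH t x * gtbH t y = (((1 + a) * (1 + b)) ^ (t/2))⁻¹ := by
    unfold gtbH
    rw [neg_div, rpow_neg (by positivity), rpow_neg (by positivity),
      mul_rpow (by positivity) (by positivity), mul_inv]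
  have hd : lam ^ ((1+δ)/2) * ((1 + a) * (1 + b)) ^ (t/2) ≤ q^2 := by
    calc lam ^ ((1+δ)/2) * ((1 + a) * (1 + b)) ^ (t/2)
        = lam ^ (2 - t) * ((1 + a) * (1 + b)) ^ (t/2) := by
          rw [show (1+δ)/2 = 2 - t by rw [htdef]; ring]
      _ ≤ q ^ (2 - t) * q ^ t :=
          mul_le_mul e2 e3 (by positivity) (by positivity)
      _ = q ^ (2:ℝ) := e1.symm
      _ = q ^ 2 := by rw [show (2:ℝ) = ((2:ℕ):ℝ) by norm_num, rpow_natCast]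
  have final : 4 / q^2 ≤ 4 * lam ^ (-(1+δ)/2) * (gtbH t x * gtbH t y) := by
    rw [hht, show (4:ℝ) * lam ^ (-(1+δ)/2) * (((1 + a) * (1 + b))^(t/2))⁻¹
        = 4 / (lam ^ ((1+δ)/2) * ((1 + a) * (1 + b))^(t/2)) by
        rw [neg_div, rpow_neg (by positivity : (0:ℝ) ≤ lam)]
        field_simp]
    exact div_le_div_of_nonneg_left (by norm_num) (by positivity) hd
  linarith

/-- Tail bound for the Green's function: assuming r₂(n) ≪ n^ε, the sum of
1/(|ξ|²−λ)² over lattice points with ||ξ|²−λ| > L = λ^δ is ≪ λ^ε/L. -/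
theorem greens_tail_bound (δ ε Cr : ℝ) (hδ0 : 0 < δ) (hδ : δ < 1) (hε : 0 < ε) (hCr : 0 < Cr)
    (hr : ∀ n : ℕ, 1 ≤ n →
      (({ξ : ℤ × ℤ | ξ.1 ^ 2 + ξ.2 ^ 2 = (n : ℤ)}).ncard : ℝ) ≤ Cr * (n : ℝ) ^ ε) :
    ∃ K : ℝ, 0 < K ∧ ∀ lam : ℝ, 1 ≤ lam →
      (∑' ξ : {ξ : ℤ × ℤ // lam ^ δ < |((ξ.1 ^ 2 + ξ.2 ^ 2 : ℤ) : ℝ) - lam|},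
          1 / (((ξ.val.1 ^ 2 + ξ.val.2 ^ 2 : ℤ) : ℝ) - lam) ^ 2)
        ≤ K * lam ^ ε / lam ^ δ := by
  classical
  set t : ℝ := (3 - δ) / 2 with htdef
  have ht1 : 1 < t := by rw [htdef]; linarith
  have hHsum : Summable (fun p : ℤ × ℤ => gtbH t p.1 * gtbH t p.2) :=
    (gtbH_summable ht1).mul_of_nonneg (gtbH_summable ht1)
      (fun k => (gtbH_pos t k).le) (fun k => (gtbH_pos t k).le)
  set Ch : ℝ := ∑' p : ℤ × ℤ, gtbH t p.1 * gtbH t p.2 with hChdef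
  have hCh0 : 0 ≤ Ch :=
    tsum_nonneg (fun p => mul_nonneg (gtbH_pos t p.1).le (gtbH_pos t p.2).le)
  refine ⟨4 * Cr * 2 ^ ε + 4 * Ch + 1, by positivity, ?_⟩
  intro lam hlam
  have hlam0 : (0:ℝ) < lam := by linarith
  set L : ℝ := lam ^ δ with hLdef
  have hL1 : 1 ≤ L := Real.one_le_rpow hlam hδ0.le
  have hL0 : 0 < L := by linarith
  have hlamδ : 0 < lam ^ δ := by positivity
  have hlamε : 1 ≤ lam ^ ε := Real.one_le_rpow hlam hε.le
  set B : ℝ := (4 * Cr * 2 ^ ε + 4 * Ch + 1) * lam ^ ε / lam ^ δ with hBdef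
  set f : {ξ : ℤ × ℤ // lam ^ δ < |((ξ.1 ^ 2 + ξ.2 ^ 2 : ℤ) : ℝ) - lam|} → ℝ :=
    fun ξ => 1 / (((ξ.val.1 ^ 2 + ξ.val.2 ^ 2 : ℤ) : ℝ) - lam) ^ 2 with hfdef
  have hfnn : (0:{ξ : ℤ × ℤ // lam ^ δ < |((ξ.1 ^ 2 + ξ.2 ^ 2 : ℤ) : ℝ) - lam|} → ℝ) ≤ f :=
    fun ξ => div_nonneg zero_le_one (sq_nonneg _)
  set F : ℤ × ℤ → ℝ := fun p => 1 / (((p.1 ^ 2 + p.2 ^ 2 : ℤ) : ℝ) - lam) ^ 2 with hFdef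
  have key : ∀ T : Finset {ξ : ℤ × ℤ // lam ^ δ < |((ξ.1 ^ 2 + ξ.2 ^ 2 : ℤ) : ℝ) - lam|},
      ∑ ξ ∈ T, f ξ ≤ B := by
    intro T
    set U : Finset (ℤ × ℤ) := T.image Subtype.val with hUdef
    have himg : ∑ ξ ∈ T, f ξ = ∑ p ∈ U, F p := by
      rw [hUdef, Finset.sum_image (fun x _ y _ h => Subtype.ext h)]
    have hU : ∀ p ∈ U, lam ^ δ < |((p.1 ^ 2 + p.2 ^ 2 : ℤ) : ℝ) - lam| := by
      intro p hp
      rw [hUdef, Finset.mem_image] at hp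
      obtain ⟨ξ, _, rfl⟩ := hp
      exact ξ.2
    rw [himg]
    -- split into far / rest
    have hsplit1 := Finset.sum_filter_add_sum_filter_not U
      (fun p => 2 * lam < ((p.1 ^ 2 + p.2 ^ 2 : ℤ) : ℝ)) F
    set Ufar := U.filter (fun p => 2 * lam < ((p.1 ^ 2 + p.2 ^ 2 : ℤ) : ℝ)) with hUfar
    set Urest := U.filter (fun p => ¬ 2 * lam < ((p.1 ^ 2 + p.2 ^ 2 : ℤ) : ℝ)) with hUrest
    have hsplit2 := Finset.sum_filter_add_sum_filter_not Urest
      (fun p => p.1 ^ 2 + p.2 ^ 2 = (0:ℤ)) F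
    set Uzero := Urest.filter (fun p => p.1 ^ 2 + p.2 ^ 2 = (0:ℤ)) with hUzero
    set Unear := Urest.filter (fun p => ¬ p.1 ^ 2 + p.2 ^ 2 = (0:ℤ)) with hUnear
    -- far bound
    have hfar : ∑ p ∈ Ufar, F p ≤ 4 * Ch * lam ^ ε / lam ^ δ := by
      have step1 : ∑ p ∈ Ufar, F p ≤
          ∑ p ∈ Ufar, 4 * lam ^ (-(1 + δ) / 2) * (gtbH t p.1 * gtbH t p.2) := by
        apply Finset.sum_le_sum
        intro p hp
        rw [hUfar, Finset.mem_filter] at hp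
        exact gtb_far δ lam hδ0 hδ hlam p.1 p.2 hp.2
      have step2 : ∑ p ∈ Ufar, 4 * lam ^ (-(1 + δ) / 2) * (gtbH t p.1 * gtbH t p.2) =
          4 * lam ^ (-(1 + δ) / 2) * ∑ p ∈ Ufar, (gtbH t p.1 * gtbH t p.2) := by
        rw [Finset.mul_sum]
      have step3 : ∑ p ∈ Ufar, (gtbH t p.1 * gtbH t p.2) ≤ Ch :=
        Summable.sum_le_tsum Ufar
          (fun p _ => mul_nonneg (gtbH_pos t p.1).le (gtbH_pos t p.2).le) hHsum
      have step4 : lam ^ (-(1 + δ) / 2) ≤ lam ^ (-δ) := by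
        apply Real.rpow_le_rpow_of_exponent_le hlam
        linarith
      have step5 : lam ^ (-δ) = 1 / lam ^ δ := by
        rw [Real.rpow_neg hlam0.le, one_div]
      calc ∑ p ∈ Ufar, F p
          ≤ 4 * lam ^ (-(1 + δ) / 2) * ∑ p ∈ Ufar, (gtbH t p.1 * gtbH t p.2) := by
            rw [← step2]; exact step1
        _ ≤ 4 * lam ^ (-δ) * Ch := by
            have h1 : (0:ℝ) ≤ lam ^ (-(1 + δ) / 2) := by positivity
            nlinarith [step3, step4, Real.rpow_pos_of_pos hlam0 (-δ)]
        _ = 4 * Ch * (1 / lam ^ δ) := by rw [step5]; ring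
        _ ≤ 4 * Ch * (lam ^ ε / lam ^ δ) := by gcongr
        _ = 4 * Ch * lam ^ ε / lam ^ δ := by ring
    -- zero bound
    have hzero : ∑ p ∈ Uzero, F p ≤ lam ^ ε / lam ^ δ := by
      have hsub : Uzero ⊆ {((0:ℤ), (0:ℤ))} := by
        intro p hp
        rw [hUzero, Finset.mem_filter] at hp
        have h0 : p.1 ^ 2 + p.2 ^ 2 = 0 := hp.2
        have h1 : p.1 ^ 2 = 0 := by nlinarith [sq_nonneg p.1, sq_nonneg p.2]
        have h2 : p.2 ^ 2 = 0 := by nlinarith [sq_nonneg p.1, sq_nonneg p.2]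
        have h1' : p.1 = 0 := by
          exact pow_eq_zero_iff (two_ne_zero) |>.1 h1
        have h2' : p.2 = 0 := by
          exact pow_eq_zero_iff (two_ne_zero) |>.1 h2
        rw [Finset.mem_singleton]
        exact Prod.ext h1' h2'
      have hF00 : F ((0:ℤ), (0:ℤ)) = 1 / lam ^ 2 := by
        rw [hFdef]
        norm_num
      calc ∑ p ∈ Uzero, F p ≤ ∑ p ∈ ({((0:ℤ), (0:ℤ))} : Finset (ℤ × ℤ)), F p :=
            Finset.sum_le_sum_of_subset_of_nonneg hsub
              (fun p _ _ => div_nonneg zero_le_one (sq_nonneg _))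
        _ = 1 / lam ^ 2 := by rw [Finset.sum_singleton, hF00]
        _ ≤ 1 / lam ^ δ := by
            apply div_le_div_of_nonneg_left zero_le_one hlamδ
            calc lam ^ δ ≤ lam ^ (1:ℝ) :=
                  Real.rpow_le_rpow_of_exponent_le hlam (by linarith)
              _ = lam := Real.rpow_one lam
              _ ≤ lam ^ 2 := by nlinarith
        _ ≤ lam ^ ε / lam ^ δ := by gcongr
    -- near bound
    have hnear : ∑ p ∈ Unear, F p ≤ 4 * Cr * 2 ^ ε * lam ^ ε / lam ^ δ := by
      have hcomp : ∑ p ∈ Unear, F p =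
          ∑ n ∈ Unear.image (fun p : ℤ × ℤ => p.1 ^ 2 + p.2 ^ 2),
            (Unear.filter (fun p => p.1 ^ 2 + p.2 ^ 2 = n)).card
              • (1 / ((n : ℝ) - lam) ^ 2) :=
        Finset.sum_comp (fun n : ℤ => 1 / ((n : ℝ) - lam) ^ 2)
          (fun p : ℤ × ℤ => p.1 ^ 2 + p.2 ^ 2)
      set V := Unear.image (fun p : ℤ × ℤ => p.1 ^ 2 + p.2 ^ 2) with hVdef
      have hVmem : ∀ n ∈ V, 1 ≤ n ∧ (n:ℝ) ≤ 2 * lam ∧ lam ^ δ < |(n:ℝ) - lam| := by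
        intro n hn
        rw [hVdef, Finset.mem_image] at hn
        obtain ⟨p, hp, rfl⟩ := hn
        rw [hUnear, Finset.mem_filter] at hp
        have hp1 := hp.1
        rw [hUrest, Finset.mem_filter] at hp1
        have hge : 0 ≤ p.1 ^ 2 + p.2 ^ 2 := by positivity
        refine ⟨by omega, by exact_mod_cast le_of_not_gt hp1.2, hU p hp1.1⟩
      have hterm : ∀ n ∈ V,
          (Unear.filter (fun p => p.1 ^ 2 + p.2 ^ 2 = n)).card
              • (1 / ((n : ℝ) - lam) ^ 2)
            ≤ Cr * 2 ^ ε * lam ^ ε * (1 / ((n : ℝ) - lam) ^ 2) := by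
        intro n hn
        obtain ⟨hn1, hn2, _⟩ := hVmem n hn
        have hcard : ((Unear.filter (fun p => p.1 ^ 2 + p.2 ^ 2 = n)).card : ℝ)
            ≤ Cr * (n : ℝ) ^ ε := by
          have hsub : ↑(Unear.filter (fun p : ℤ × ℤ => p.1 ^ 2 + p.2 ^ 2 = n)) ⊆
              {ξ : ℤ × ℤ | ξ.1 ^ 2 + ξ.2 ^ 2 = n} := by
            intro p hp
            rw [Finset.mem_coe, Finset.mem_filter] at hp
            exact hp.2
          have h1 : (Unear.filter (fun p : ℤ × ℤ => p.1 ^ 2 + p.2 ^ 2 = n)).card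
              ≤ {ξ : ℤ × ℤ | ξ.1 ^ 2 + ξ.2 ^ 2 = n}.ncard := by
            rw [← Set.ncard_coe_finset]
            exact Set.ncard_le_ncard hsub (gtb_fiber_finite n)
          have hc1 : ((n.toNat : ℕ) : ℤ) = n := Int.toNat_of_nonneg (by omega)
          have h2 := hr n.toNat (by omega)
          rw [hc1] at h2
          have hc2 : ((n.toNat : ℕ) : ℝ) = (n : ℝ) := by exact_mod_cast congrArg (fun z : ℤ => (z:ℝ)) hc1
          rw [hc2] at h2
          calc ((Unear.filter (fun p : ℤ × ℤ => p.1 ^ 2 + p.2 ^ 2 = n)).card : ℝ)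
              ≤ ({ξ : ℤ × ℤ | ξ.1 ^ 2 + ξ.2 ^ 2 = n}.ncard : ℝ) := by exact_mod_cast h1
            _ ≤ Cr * (n : ℝ) ^ ε := h2
        have hrp : (n : ℝ) ^ ε ≤ 2 ^ ε * lam ^ ε := by
          rw [← Real.mul_rpow (by norm_num) hlam0.le]
          apply Real.rpow_le_rpow (by exact_mod_cast (by omega : (0:ℤ) ≤ n)) hn2 hε.le
        rw [nsmul_eq_mul]
        have hv : (0:ℝ) ≤ 1 / ((n : ℝ) - lam) ^ 2 := div_nonneg zero_le_one (sq_nonneg _)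
        calc ((Unear.filter (fun p => p.1 ^ 2 + p.2 ^ 2 = n)).card : ℝ)
              * (1 / ((n : ℝ) - lam) ^ 2)
            ≤ (Cr * (n : ℝ) ^ ε) * (1 / ((n : ℝ) - lam) ^ 2) :=
              mul_le_mul_of_nonneg_right hcard hv
          _ ≤ (Cr * (2 ^ ε * lam ^ ε)) * (1 / ((n : ℝ) - lam) ^ 2) := by
              apply mul_le_mul_of_nonneg_right _ hv
              exact mul_le_mul_of_nonneg_left hrp hCr.le
          _ = Cr * 2 ^ ε * lam ^ ε * (1 / ((n : ℝ) - lam) ^ 2) := by ring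
      have hsumV : ∑ n ∈ V, (1 / ((n : ℝ) - lam) ^ 2) ≤ 4 / lam ^ δ := by
        apply gtb_int_sum lam (lam ^ δ) hL1 V
        intro n hn
        exact (hVmem n hn).2.2
      calc ∑ p ∈ Unear, F p
          = ∑ n ∈ V, (Unear.filter (fun p => p.1 ^ 2 + p.2 ^ 2 = n)).card
              • (1 / ((n : ℝ) - lam) ^ 2) := hcomp
        _ ≤ ∑ n ∈ V, Cr * 2 ^ ε * lam ^ ε * (1 / ((n : ℝ) - lam) ^ 2) :=
            Finset.sum_le_sum hterm
        _ = Cr * 2 ^ ε * lam ^ ε * ∑ n ∈ V, (1 / ((n : ℝ) - lam) ^ 2) := by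
            rw [Finset.mul_sum]
        _ ≤ Cr * 2 ^ ε * lam ^ ε * (4 / lam ^ δ) := by
            apply mul_le_mul_of_nonneg_left hsumV (by positivity)
        _ = 4 * Cr * 2 ^ ε * lam ^ ε / lam ^ δ := by ring
    -- combine
    have htot : ∑ p ∈ U, F p = ∑ p ∈ Ufar, F p + (∑ p ∈ Uzero, F p + ∑ p ∈ Unear, F p) := by
      rw [← hsplit1, ← hsplit2]
    rw [htot, hBdef]
    have hfinal : (4 * Cr * 2 ^ ε + 4 * Ch + 1) * lam ^ ε / lam ^ δ =
        4 * Ch * lam ^ ε / lam ^ δ + (lam ^ ε / lam ^ δ + 4 * Cr * 2 ^ ε * lam ^ ε / lam ^ δ) := by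
      ring
    rw [hfinal]
    exact add_le_add hfar (add_le_add hzero hnear)
  exact Summable.tsum_le_of_sum_le (summable_of_sum_le hfnn key) key
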